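/- Let C̄ > 0, k ≥ 2 an integer, 0 ≤ r₀ < r₁ < ∞, and let β : [r₀, r₁] → (0,∞) be a non-decreasing function satisfying β(r₀) = r₀^k / (C̄^{k-1} k^k) and β(r) ≤ C̄ · (β'(r))^{k/(k-1)} for almost every r ∈ (r₀, r₁) (where β' denotes the derivative, which exists almost everywhere since β is monotone). Then β(r) ≥ r^k / (C̄^{k-1} k^k) for all r ∈ [r₀, r₁]. -/

import Mathlib

open Set MeasureTheory Filter

/-- For a monotone function `f : ℝ → ℝ` whose derivative is a.e. at least `c ≥ 0` on `(a,b)`,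
we have `c * (b - a) ≤ f b - f a`. -/
lemma mono_sub_ge_of_ae_deriv_ge {f : ℝ → ℝ} (hf : Monotone f) {a b c : ℝ}
    (hab : a ≤ b) (hc : 0 ≤ c)
    (h : ∀ᵐ x ∂volume, x ∈ Set.Ioo a b → c ≤ deriv f x) :
    c * (b - a) ≤ f b - f a := by
  set g := hf.stieltjesFunction with hg
  set μ := g.measure with hμ
  have h1 : ∀ᵐ x ∂volume, x ∈ Set.Ioo a b → ENNReal.ofReal c ≤ μ.rnDeriv volume x := by
    filter_upwards [h, hf.ae_hasDerivAt] with x hx hx' hxab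
    have hde : deriv f x = (μ.rnDeriv volume x).toReal := hx'.deriv
    by_cases h2 : μ.rnDeriv volume x = ⊤
    · simp [h2]
    · rw [← ENNReal.ofReal_toReal h2]
      exact ENNReal.ofReal_le_ofReal (hde ▸ hx hxab)
  have h2 : ENNReal.ofReal c * volume (Set.Ioo a b) ≤ μ (Set.Ioo a b) := by
    calc ENNReal.ofReal c * volume (Set.Ioo a b)
        = ∫⁻ _ in Set.Ioo a b, ENNReal.ofReal c ∂volume := by
          rw [setLIntegral_const, mul_comm]
      _ ≤ ∫⁻ x in Set.Ioo a b, μ.rnDeriv volume x ∂volume :=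
          lintegral_mono_ae ((ae_restrict_iff' measurableSet_Ioo).2 h1)
      _ ≤ μ (Set.Ioo a b) := Measure.setLIntegral_rnDeriv_le _
  have h3 : μ (Set.Ioo a b) ≤ ENNReal.ofReal (f b - f a) := by
    rw [hμ, g.measure_Ioo]
    apply ENNReal.ofReal_le_ofReal
    have hga : f a ≤ g a := by
      rw [hg, hf.stieltjesFunction_eq]; exact hf.le_rightLim le_rfl
    have hgb : Function.leftLim g b ≤ f b := by
      apply le_of_tendsto (g.mono.tendsto_leftLim b)
      filter_upwards [self_mem_nhdsWithin] with y hy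
      rw [hg, hf.stieltjesFunction_eq]
      exact hf.rightLim_le hy
    linarith
  have h4 := h2.trans h3
  rw [Real.volume_Ioo, ← ENNReal.ofReal_mul hc] at h4
  have hba : 0 ≤ f b - f a := sub_nonneg.2 (hf hab)
  exact (ENNReal.ofReal_le_ofReal_iff hba).1 h4

theorem stmt_0 (C : ℝ) (hC : 0 < C) (k : ℕ) (hk : 2 ≤ k) (r₀ r₁ : ℝ)
    (hr₀ : 0 ≤ r₀) (hr : r₀ < r₁) (β : ℝ → ℝ)
    (hmono : MonotoneOn β (Set.Icc r₀ r₁))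
    (hpos : ∀ r ∈ Set.Icc r₀ r₁, 0 < β r)
    (hinit : β r₀ = r₀ ^ k / (C ^ (k - 1) * (k : ℝ) ^ k))
    (hdiff : ∀ᵐ r ∂volume, r ∈ Set.Ioo r₀ r₁ → DifferentiableAt ℝ β r)
    (hineq : ∀ᵐ r ∂volume, r ∈ Set.Ioo r₀ r₁ →
      β r ≤ C * (deriv β r) ^ ((k : ℝ) / ((k : ℝ) - 1))) :
    ∀ r ∈ Set.Icc r₀ r₁, r ^ k / (C ^ (k - 1) * (k : ℝ) ^ k) ≤ β r := by
  have hk1 : (1 : ℝ) < (k : ℝ) := by exact_mod_cast Nat.lt_of_lt_of_le one_lt_two hk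
  have hk0 : (0 : ℝ) < (k : ℝ) := lt_trans one_pos hk1
  set α : ℝ := ((k : ℝ) - 1) / k with hα
  have hα0 : 0 < α := div_pos (by linarith) hk0
  have hCα : (0 : ℝ) < C ^ α := Real.rpow_pos_of_pos hC α
  set c : ℝ := 1 / ((k : ℝ) * C ^ α) with hc
  have hc0 : 0 < c := by positivity
  -- key algebraic identity : (c*x)^k = x^k / (C^(k-1) * k^k)
  have hCk : (C ^ α) ^ k = C ^ (k - 1) := by
    rw [← Real.rpow_natCast (C ^ α) k, ← Real.rpow_mul hC.le]
    have : α * k = ((k - 1 : ℕ) : ℝ) := by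
      rw [Nat.cast_sub (le_trans one_le_two hk), Nat.cast_one, hα]
      field_simp
    rw [this, Real.rpow_natCast]
  have hck : ∀ x : ℝ, (c * x) ^ k = x ^ k / (C ^ (k - 1) * (k : ℝ) ^ k) := by
    intro x
    rw [mul_pow, hc, div_pow, one_pow, mul_pow, hCk]
    rw [div_mul_eq_mul_div, one_mul, mul_comm (((k : ℝ)) ^ k) _]
  -- the clamping function
  set p : ℝ → ℝ := fun x => min (max x r₀) r₁ with hp
  have hp_mem : ∀ x, p x ∈ Set.Icc r₀ r₁ := by
    intro x
    constructor
    · exact le_min (le_max_right x r₀) hr.le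
    · exact min_le_right _ _
  have hp_eq : ∀ x ∈ Set.Icc r₀ r₁, p x = x := by
    intro x hx
    rw [hp]; simp only [max_eq_left hx.1, min_eq_left hx.2]
  have hp_mono : Monotone p := fun x y hxy =>
    min_le_min (max_le_max hxy le_rfl) le_rfl
  set βe : ℝ → ℝ := fun x => β (p x) with hβe
  have hβe_mono : Monotone βe := fun x y hxy => hmono (hp_mem x) (hp_mem y) (hp_mono hxy)
  have hβe_pos : ∀ x, 0 < βe x := fun x => hpos _ (hp_mem x)
  set G : ℝ → ℝ := fun x => (βe x) ^ (1 / (k : ℝ)) with hG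
  have hG_mono : Monotone G := fun x y hxy =>
    Real.rpow_le_rpow (hβe_pos x).le (hβe_mono hxy) (by positivity)
  -- a.e. lower bound for deriv G on (r₀, r₁)
  have hae : ∀ᵐ x ∂volume, x ∈ Set.Ioo r₀ r₁ → c ≤ deriv G x := by
    filter_upwards [hdiff, hineq] with x hd hi hx
    have hxI : x ∈ Set.Icc r₀ r₁ := ⟨hx.1.le, hx.2.le⟩
    have hβx : 0 < β x := hpos x hxI
    have hβd : DifferentiableAt ℝ β x := hd hx
    -- G agrees with fun y => β y ^ (1/k) near x
    have hnhds : Set.Ioo r₀ r₁ ∈ nhds x := Ioo_mem_nhds hx.1 hx.2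
    have hG_eq : G =ᶠ[nhds x] fun y => (β y) ^ (1 / (k : ℝ)) := by
      filter_upwards [hnhds] with y hy
      rw [hG]; simp only [hβe, hp_eq y ⟨hy.1.le, hy.2.le⟩]
    -- deriv β x ≥ 0
    have hd0 : 0 ≤ deriv β x := by
      have ht : Tendsto (slope β x) (nhdsWithin x (Set.Ioi x)) (nhds (deriv β x)) := by
        have := hasDerivAt_iff_tendsto_slope.1 hβd.hasDerivAt
        exact this.mono_left (nhdsWithin_mono x fun y (hy : x < y) => hy.ne')
      refine ge_of_tendsto ht ?_
      filter_upwards [Ioo_mem_nhdsGT_of_mem ⟨le_refl x, hx.2⟩] with y hy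
      rw [slope_def_field]
      have hyI : y ∈ Set.Icc r₀ r₁ := ⟨le_trans hx.1.le hy.1.le, hy.2.le⟩
      exact div_nonneg (sub_nonneg.2 (hmono hxI hyI hy.1.le)) (sub_nonneg.2 hy.1.le)
    have hi' : β x ≤ C * (deriv β x) ^ ((k : ℝ) / ((k : ℝ) - 1)) := hi hx
    -- deriv β x > 0
    have hd1 : 0 < deriv β x := by
      rcases hd0.lt_or_eq with h' | h'
      · exact h'
      · exfalso
        rw [← h', Real.zero_rpow
          (ne_of_gt (div_pos hk0 (by linarith)) : ((k : ℝ) / ((k : ℝ) - 1)) ≠ 0)] at hi'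
        rw [mul_zero] at hi'
        linarith
    -- key: β x ^ α ≤ C ^ α * deriv β x
    have hkey : β x ^ α ≤ C ^ α * deriv β x := by
      have h2 := Real.rpow_le_rpow hβx.le hi' hα0.le
      rwa [Real.mul_rpow hC.le (by positivity), ← Real.rpow_mul hd1.le,
        show ((k : ℝ) / ((k : ℝ) - 1)) * α = 1 by
          rw [hα, div_mul_div_comm, mul_comm ((k : ℝ) - 1) (k : ℝ)]
          exact div_self (by nlinarith),
        Real.rpow_one] at h2
    -- compute deriv G x
    have hGd : HasDerivAt (fun y => (β y) ^ (1 / (k : ℝ)))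
        (deriv β x * (1 / (k : ℝ)) * β x ^ (1 / (k : ℝ) - 1)) x :=
      hβd.hasDerivAt.rpow_const (Or.inl hβx.ne')
    have hderiv : deriv G x = deriv β x * (1 / (k : ℝ)) * β x ^ (1 / (k : ℝ) - 1) := by
      rw [hG_eq.deriv_eq, hGd.deriv]
    rw [hderiv]
    have hβα : 0 < β x ^ α := Real.rpow_pos_of_pos hβx α
    have hpow : β x ^ (1 / (k : ℝ) - 1) = (β x ^ α)⁻¹ := by
      rw [← Real.rpow_neg hβx.le, hα]
      congr 1
      field_simp
      ring
    rw [hpow]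
    have hd2 : β x ^ α / C ^ α ≤ deriv β x := by
      rw [div_le_iff₀ hCα, mul_comm]
      exact hkey
    calc c = (β x ^ α / C ^ α) * (1 / (k : ℝ)) * (β x ^ α)⁻¹ := by
          rw [hc]; field_simp
      _ ≤ deriv β x * (1 / (k : ℝ)) * (β x ^ α)⁻¹ := by
          apply mul_le_mul_of_nonneg_right _ (by positivity)
          apply mul_le_mul_of_nonneg_right hd2 (by positivity)
  -- value at r₀
  have hGr₀ : G r₀ = c * r₀ := by
    have h0 : βe r₀ = (c * r₀) ^ k := by
      show β (p r₀) = _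
      rw [hp_eq r₀ ⟨le_refl r₀, hr.le⟩, hinit, hck r₀]
    show βe r₀ ^ (1 / (k : ℝ)) = c * r₀
    rw [h0, ← Real.rpow_natCast (c * r₀) k, ← Real.rpow_mul (by positivity),
      mul_one_div, div_self hk0.ne', Real.rpow_one]
  -- main argument
  intro r hrI
  have h1 : c * (r - r₀) ≤ G r - G r₀ :=
    mono_sub_ge_of_ae_deriv_ge hG_mono hrI.1 hc0.le
      (by filter_upwards [hae] with x hx hx'
          exact hx ⟨hx'.1, lt_of_lt_of_le hx'.2 hrI.2⟩)
  have h2 : c * r ≤ G r := by rw [hGr₀] at h1; linarith [h1]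
  have hcr : 0 ≤ c * r := mul_nonneg hc0.le (le_trans hr₀ hrI.1)
  have h3 : (c * r) ^ k ≤ (G r) ^ k := pow_le_pow_left₀ hcr h2 k
  have hGrk : (G r) ^ k = βe r := by
    show (βe r ^ (1 / (k : ℝ))) ^ k = βe r
    rw [← Real.rpow_natCast (βe r ^ (1 / (k : ℝ))) k, ← Real.rpow_mul (hβe_pos r).le,
      one_div_mul_cancel hk0.ne', Real.rpow_one]
  rw [hGrk] at h3
  have h4 : βe r = β r := by
    show β (p r) = β r
    rw [hp_eq r hrI]
  rw [h4] at h3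
  calc r ^ k / (C ^ (k - 1) * (k : ℝ) ^ k) = (c * r) ^ k := (hck r).symm
    _ ≤ β r := h3
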